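/- For any tree T with at least 3 vertices, the maximum degree Δ(T) satisfies (1/4)ρ(T)² + 1 < Δ(T) ≤ ρ(T)², where ρ(T) is the spectral radius (largest eigenvalue of the adjacency matrix) of T. -/

import Mathlib

open scoped BigOperators

/-- Spectral radius of a finite graph: supremum of real eigenvalues of its adjacency matrix. -/
noncomputable def specRad {V : Type} [Fintype V] [DecidableEq V]
    (G : SimpleGraph V) [DecidableRel G.Adj] : ℝ :=
  sSup {μ : ℝ | Module.End.HasEigenvalue (Matrix.toLin' (G.adjMatrix ℝ)) μ}

set_option linter.unusedSectionVars false

section TreeSpectral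

open SimpleGraph Finset Matrix
open scoped RealInnerProductSpace

variable {V : Type} [Fintype V] [DecidableEq V] {G : SimpleGraph V} [DecidableRel G.Adj]

/-- Any vertex on a walk to `r` has distance to `r` at most the walk's length. -/
lemma dist_le_of_mem_support {u r w : V} (p : G.Walk u r) (hw : w ∈ p.support) :
    G.dist w r ≤ p.length := by
  calc G.dist w r ≤ (p.dropUntil w hw).length := SimpleGraph.dist_le _
    _ ≤ p.length := SimpleGraph.Walk.length_dropUntil_le p hw

/-- In a tree, adjacent vertices have distances to `r` differing by exactly one. -/
lemma tree_adj_dist (hT : G.IsTree) (r : V) {u v : V} (h : G.Adj u v) :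
    G.dist u r + 1 = G.dist v r ∨ G.dist v r + 1 = G.dist u r := by
  have hconn := hT.isConnected
  have htri : G.dist v r ≤ G.dist u r + 1 := by
    calc G.dist v r ≤ G.dist v u + G.dist u r := hconn.dist_triangle
      _ = G.dist u r + 1 := by
          rw [SimpleGraph.dist_eq_one_iff_adj.2 h.symm]; omega
  have htri' : G.dist u r ≤ G.dist v r + 1 := by
    calc G.dist u r ≤ G.dist u v + G.dist v r := hconn.dist_triangle
      _ = G.dist v r + 1 := by
          rw [SimpleGraph.dist_eq_one_iff_adj.2 h]; omega
  have hne : G.dist u r ≠ G.dist v r := by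
    intro heq
    obtain ⟨p, hp, hlen⟩ := hconn.exists_path_of_dist u r
    have hvs : v ∉ p.support := by
      intro hv
      have h1 : G.dist v r ≤ (p.dropUntil v hv).length := SimpleGraph.dist_le _
      have h2 : (p.takeUntil v hv).length + (p.dropUntil v hv).length = p.length := by
        conv_rhs => rw [← p.take_spec hv]
        rw [SimpleGraph.Walk.length_append]
      have h3 : 1 ≤ (p.takeUntil v hv).length := by
        by_contra hc
        push_neg at hc
        interval_cases hc' : (p.takeUntil v hv).length
        · exact h.ne (SimpleGraph.Walk.eq_of_length_eq_zero hc')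
      omega
    have hq : (SimpleGraph.Walk.cons h.symm p).IsPath :=
      hp.cons hvs
    obtain ⟨pv, hpv, hlenv⟩ := hconn.exists_path_of_dist v r
    have := (hT.existsUnique_path v r).unique hq hpv
    have hlen2 := congrArg SimpleGraph.Walk.length this
    simp [SimpleGraph.Walk.length_cons, hlen, hlenv] at hlen2
    omega
  omega

/-- Uniqueness of the parent. -/
lemma tree_parent_unique (hT : G.IsTree) (r : V) {v u₁ u₂ : V}
    (h₁ : G.Adj v u₁) (h₂ : G.Adj v u₂)
    (hd₁ : G.dist u₁ r + 1 = G.dist v r) (hd₂ : G.dist u₂ r + 1 = G.dist v r) : u₁ = u₂ := by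
  have hconn := hT.isConnected
  have key : ∀ u : V, G.Adj v u → G.dist u r + 1 = G.dist v r →
      ∃ q : G.Walk v r, q.IsPath ∧ q.support.tail.head? = some u := by
    intro u hadj hd
    obtain ⟨p, hp, hlen⟩ := hconn.exists_path_of_dist u r
    have hvs : v ∉ p.support := by
      intro hv
      have := dist_le_of_mem_support p hv
      omega
    refine ⟨SimpleGraph.Walk.cons hadj p, hp.cons hvs, ?_⟩
    rw [SimpleGraph.Walk.support_cons, List.tail_cons, p.support_eq_cons]
    rfl
  obtain ⟨q₁, hq₁, hh₁⟩ := key u₁ h₁ hd₁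
  obtain ⟨q₂, hq₂, hh₂⟩ := key u₂ h₂ hd₂
  have := (hT.existsUnique_path v r).unique hq₁ hq₂
  rw [this] at hh₁
  rw [hh₁] at hh₂
  exact Option.some_injective _ hh₂

/-- Existence of the parent. -/
lemma tree_parent_exists (hT : G.IsTree) (r : V) {v : V} (hv : v ≠ r) :
    ∃ u : V, G.Adj v u ∧ G.dist u r + 1 = G.dist v r := by
  have hconn := hT.isConnected
  obtain ⟨p, hp, hlen⟩ := hconn.exists_path_of_dist v r
  cases p with
  | nil => exact absurd rfl hv
  | cons hadj q =>
    rename_i u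
    refine ⟨u, hadj, ?_⟩
    have h1 : G.dist u r ≤ q.length := SimpleGraph.dist_le _
    have h2 : G.dist v r ≤ G.dist u r + 1 := by
      calc G.dist v r ≤ G.dist v u + G.dist u r := hconn.dist_triangle
        _ = G.dist u r + 1 := by rw [SimpleGraph.dist_eq_one_iff_adj.2 hadj]; omega
    simp [SimpleGraph.Walk.length_cons] at hlen
    omega

section ParentSums

/-- The set of "parents" of `v`: adjacent vertices one step closer to the root. -/
lemma par_eq (hT : G.IsTree) (r : V) (P : V → V)
    (hP : ∀ v, v ≠ r → G.Adj v (P v) ∧ G.dist (P v) r + 1 = G.dist v r) (v : V) :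
    univ.filter (fun u => G.Adj u v ∧ G.dist u r + 1 = G.dist v r)
      = if v = r then (∅ : Finset V) else {P v} := by
  split_ifs with hv
  · subst hv
    ext u
    simp only [mem_filter, mem_univ, true_and, Finset.notMem_empty, iff_false]
    rintro ⟨-, hd⟩
    rw [SimpleGraph.dist_self] at hd
    omega
  · ext u
    simp only [mem_filter, mem_univ, true_and, Finset.mem_singleton]
    constructor
    · rintro ⟨hadj, hd⟩
      exact tree_parent_unique hT r hadj.symm (hP v hv).1 hd (hP v hv).2
    · rintro rfl
      exact ⟨(hP v hv).1.symm, (hP v hv).2⟩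

lemma sum_adj_split (hT : G.IsTree) (r : V) (P : V → V)
    (hP : ∀ v, v ≠ r → G.Adj v (P v) ∧ G.dist (P v) r + 1 = G.dist v r) (f : V → V → ℝ) :
    ∑ u, ∑ v, (G.adjMatrix ℝ) u v * f u v
      = ∑ v ∈ univ.filter (· ≠ r), (f (P v) v + f v (P v)) := by
  have hsplit : ∀ u v : V, (G.adjMatrix ℝ) u v * f u v
      = (if G.Adj u v ∧ G.dist u r + 1 = G.dist v r then f u v else 0)
        + (if G.Adj u v ∧ G.dist v r + 1 = G.dist u r then f u v else 0) := by
    intro u v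
    rw [SimpleGraph.adjMatrix_apply]
    by_cases h : G.Adj u v
    · rcases tree_adj_dist hT r h with hd | hd
      · have hd' : ¬ (G.dist v r + 1 = G.dist u r) := by omega
        simp [h, hd, hd']
      · have hd' : ¬ (G.dist u r + 1 = G.dist v r) := by omega
        simp [h, hd, hd']
    · simp [h]
  simp only [hsplit, Finset.sum_add_distrib]
  have h1 : ∑ u : V, ∑ v : V,
      (if G.Adj u v ∧ G.dist u r + 1 = G.dist v r then f u v else 0)
      = ∑ v ∈ univ.filter (· ≠ r), f (P v) v := by
    rw [Finset.sum_comm]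
    have : ∀ v : V, ∑ u : V,
        (if G.Adj u v ∧ G.dist u r + 1 = G.dist v r then f u v else 0)
        = if v = r then 0 else f (P v) v := by
      intro v
      rw [← Finset.sum_filter, par_eq hT r P hP v]
      split_ifs <;> simp
    rw [Finset.sum_congr rfl (fun v _ => this v)]
    rw [Finset.sum_ite, Finset.sum_const_zero, zero_add]
  have h2 : ∑ u : V, ∑ v : V,
      (if G.Adj u v ∧ G.dist v r + 1 = G.dist u r then f u v else 0)
      = ∑ u ∈ univ.filter (· ≠ r), f u (P u) := by
    have : ∀ u : V, ∑ v : V,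
        (if G.Adj u v ∧ G.dist v r + 1 = G.dist u r then f u v else 0)
        = if u = r then 0 else f u (P u) := by
      intro u
      have hrw : ∀ v : V, (G.Adj u v ∧ G.dist v r + 1 = G.dist u r)
          = (G.Adj v u ∧ G.dist v r + 1 = G.dist u r) := by
        intro v; rw [SimpleGraph.adj_comm]
      simp only [hrw]
      rw [← Finset.sum_filter, par_eq hT r P hP u]
      split_ifs <;> simp
    rw [Finset.sum_congr rfl (fun u _ => this u)]
    rw [Finset.sum_ite, Finset.sum_const_zero, zero_add]
  rw [h1, h2, ← Finset.sum_add_distrib]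

/-- Fiberwise sum over children. -/
lemma sum_parent_fiber (r : V) (P : V → V) (g : V → ℝ) :
    ∑ v ∈ univ.filter (· ≠ r), g (P v)
      = ∑ w : V, ((univ.filter (· ≠ r)).filter (fun v => P v = w)).card * g w := by
  rw [← Finset.sum_fiberwise_of_maps_to (g := P) (t := univ) (fun v _ => mem_univ _)]
  refine Finset.sum_congr rfl fun w _ => ?_
  rw [Finset.sum_congr rfl (fun v hv => by
        rw [(Finset.mem_filter.1 hv).2]), Finset.sum_const, nsmul_eq_mul]

/-- Children count bound for non-root vertices. -/
lemma children_card_add_one_le (r : V) (P : V → V)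
    (hP : ∀ v, v ≠ r → G.Adj v (P v) ∧ G.dist (P v) r + 1 = G.dist v r) {w : V} (hw : w ≠ r) :
    ((univ.filter (· ≠ r)).filter (fun v => P v = w)).card + 1 ≤ G.degree w := by
  rw [← SimpleGraph.card_neighborFinset_eq_degree]
  have hsub : insert (P w) ((univ.filter (· ≠ r)).filter (fun v => P v = w))
      ⊆ G.neighborFinset w := by
    intro v hv
    rcases Finset.mem_insert.1 hv with rfl | hv
    · rw [SimpleGraph.mem_neighborFinset]
      exact (hP w hw).1
    · rw [SimpleGraph.mem_neighborFinset]
      obtain ⟨hv1, hv2⟩ := Finset.mem_filter.1 hv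
      have := (hP v (Finset.mem_filter.1 hv1).2).1
      rw [hv2] at this
      exact this.symm
  have hnot : P w ∉ (univ.filter (· ≠ r)).filter (fun v => P v = w) := by
    intro hmem
    obtain ⟨hv1, hv2⟩ := Finset.mem_filter.1 hmem
    have h1 := (hP w hw).2
    have h2 := (hP (P w) (Finset.mem_filter.1 hv1).2).2
    rw [hv2] at h2
    omega
  calc ((univ.filter (· ≠ r)).filter (fun v => P v = w)).card + 1
      = (insert (P w) ((univ.filter (· ≠ r)).filter (fun v => P v = w))).card := by
        rw [Finset.card_insert_of_notMem hnot]
    _ ≤ (G.neighborFinset w).card := Finset.card_le_card hsub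

lemma children_card_le (r : V) (P : V → V)
    (hP : ∀ v, v ≠ r → G.Adj v (P v) ∧ G.dist (P v) r + 1 = G.dist v r) (w : V) :
    ((univ.filter (· ≠ r)).filter (fun v => P v = w)).card ≤ G.degree w := by
  rw [← SimpleGraph.card_neighborFinset_eq_degree]
  refine Finset.card_le_card fun v hv => ?_
  rw [SimpleGraph.mem_neighborFinset]
  obtain ⟨hv1, hv2⟩ := Finset.mem_filter.1 hv
  have := (hP v (Finset.mem_filter.1 hv1).2).1
  rw [hv2] at this
  exact this.symm

end ParentSums

variable (G)

noncomputable def Tclm : EuclideanSpace ℝ V →L[ℝ] EuclideanSpace ℝ V :=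
  LinearMap.toContinuousLinearMap (Matrix.toEuclideanLin (G.adjMatrix ℝ))

lemma Tclm_apply (x : EuclideanSpace ℝ V) (v : V) :
    Tclm G x v = ∑ u : V, (G.adjMatrix ℝ) v u * x u := by
  show (Matrix.toEuclideanLin (G.adjMatrix ℝ) x) v = _
  rw [Matrix.toEuclideanLin_apply]
  rfl

lemma inner_euc (x y : EuclideanSpace ℝ V) : ⟪x, y⟫ = ∑ v : V, x v * y v := by
  simp [PiLp.inner_apply, RCLike.inner_apply, mul_comm]

lemma Tinner (x y : EuclideanSpace ℝ V) :
    ⟪Tclm G x, y⟫ = ∑ v : V, ∑ u : V, (G.adjMatrix ℝ) v u * (x u * y v) := by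
  rw [inner_euc]
  refine Finset.sum_congr rfl fun v _ => ?_
  rw [Tclm_apply, Finset.sum_mul]
  exact Finset.sum_congr rfl fun u _ => by ring

lemma Tsymm : (Tclm G : EuclideanSpace ℝ V →ₗ[ℝ] EuclideanSpace ℝ V).IsSymmetric := by
  intro x y
  simp only [ContinuousLinearMap.coe_coe]
  rw [show (inner ℝ x (Tclm G y) : ℝ) = ⟪Tclm G y, x⟫ from real_inner_comm _ _, Tinner, Tinner,
    Finset.sum_comm]
  refine Finset.sum_congr rfl fun v _ => Finset.sum_congr rfl fun u _ => ?_
  rw [show (G.adjMatrix ℝ) u v = (G.adjMatrix ℝ) v u by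
    simp [SimpleGraph.adjMatrix_apply, SimpleGraph.adj_comm]]
  ring

lemma TselfAdj : IsSelfAdjoint (Tclm G) :=
  ContinuousLinearMap.isSelfAdjoint_iff_isSymmetric.2 (Tsymm G)

lemma hasEigen_transfer (μ : ℝ) :
    Module.End.HasEigenvalue (Matrix.toLin' (G.adjMatrix ℝ)) μ ↔
      Module.End.HasEigenvalue
        (Tclm G : EuclideanSpace ℝ V →ₗ[ℝ] EuclideanSpace ℝ V) μ := by
  constructor
  · intro h
    obtain ⟨x, hx, hx0⟩ := h.exists_hasEigenvector
    refine Module.End.hasEigenvalue_of_hasEigenvector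
      (x := (WithLp.equiv 2 (V → ℝ)).symm x) ⟨?_, by simpa using hx0⟩
    rw [Module.End.mem_eigenspace_iff] at hx ⊢
    rw [Matrix.toLin'_apply] at hx
    apply PiLp.ext
    intro v
    have : (Tclm G ((WithLp.equiv 2 (V → ℝ)).symm x)) v = ((G.adjMatrix ℝ) *ᵥ x) v := by
      rw [Tclm_apply]; rfl
    simp only [ContinuousLinearMap.coe_coe]
    rw [this, hx]
    rfl
  · intro h
    obtain ⟨x, hx, hx0⟩ := h.exists_hasEigenvector
    refine Module.End.hasEigenvalue_of_hasEigenvector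
      (x := WithLp.equiv 2 (V → ℝ) x) ⟨?_, by simpa using hx0⟩
    rw [Module.End.mem_eigenspace_iff] at hx ⊢
    rw [Matrix.toLin'_apply]
    funext v
    have : (Tclm G x) v = ((G.adjMatrix ℝ) *ᵥ (WithLp.equiv 2 (V → ℝ) x)) v := by
      rw [Tclm_apply]; rfl
    simp only [ContinuousLinearMap.coe_coe] at hx
    have h2 := congrFun (congrArg (WithLp.equiv 2 (V → ℝ)) hx) v
    rw [← this]
    exact h2

variable [Nonempty V]

noncomputable def Mval : ℝ :=
  ⨆ x : {x : EuclideanSpace ℝ V // x ≠ 0},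
    (⟪Tclm G x.1, x.1⟫ : ℝ) / ‖x.1‖ ^ 2

lemma rayleigh_bddAbove :
    BddAbove (Set.range fun x : {x : EuclideanSpace ℝ V // x ≠ 0} =>
      (⟪Tclm G x.1, x.1⟫ : ℝ) / ‖x.1‖ ^ 2) := by
  refine ⟨‖Tclm G‖, ?_⟩
  rintro y ⟨⟨x, hx⟩, rfl⟩
  have hx0 : (0:ℝ) < ‖x‖ ^ 2 := by have := norm_pos_iff.mpr hx; positivity
  rw [div_le_iff₀ hx0]
  calc (⟪Tclm G x, x⟫ : ℝ) ≤ ‖Tclm G x‖ * ‖x‖ := real_inner_le_norm _ _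
    _ ≤ (‖Tclm G‖ * ‖x‖) * ‖x‖ := by
        have := (Tclm G).le_opNorm x
        nlinarith [norm_nonneg x]
    _ = ‖Tclm G‖ * ‖x‖ ^ 2 := by ring

lemma rayleigh_le_M (x : EuclideanSpace ℝ V) (hx : x ≠ 0) :
    (⟪Tclm G x, x⟫ : ℝ) / ‖x‖ ^ 2 ≤ Mval G :=
  le_ciSup (rayleigh_bddAbove G) ⟨x, hx⟩

lemma M_hasEigenvalue :
    Module.End.HasEigenvalue
      (Tclm G : EuclideanSpace ℝ V →ₗ[ℝ] EuclideanSpace ℝ V) (Mval G) :=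
  (Tsymm G).hasEigenvalue_iSup_of_finiteDimensional

lemma eig_le_M {μ : ℝ}
    (h : Module.End.HasEigenvalue
      (Tclm G : EuclideanSpace ℝ V →ₗ[ℝ] EuclideanSpace ℝ V) μ) : μ ≤ Mval G := by
  obtain ⟨x, hx, hx0⟩ := h.exists_hasEigenvector
  rw [Module.End.mem_eigenspace_iff] at hx
  rw [ContinuousLinearMap.coe_coe] at hx
  have : (⟪Tclm G x, x⟫ : ℝ) / ‖x‖ ^ 2 = μ := by
    have hxx : (‖x‖ : ℝ) ^ 2 ≠ 0 := by have := norm_pos_iff.mpr hx0; positivity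
    rw [hx, real_inner_smul_left, real_inner_self_eq_norm_sq, mul_div_assoc, div_self hxx,
      mul_one]
  rw [← this]
  exact rayleigh_le_M G x hx0

lemma specRad_eq_M : specRad G = Mval G := by
  apply le_antisymm
  · apply csSup_le
    · exact ⟨Mval G, (hasEigen_transfer G _).2 (M_hasEigenvalue G)⟩
    · intro μ hμ
      exact eig_le_M G ((hasEigen_transfer G μ).1 hμ)
  · apply le_csSup
    · exact ⟨Mval G, fun μ hμ => eig_le_M G ((hasEigen_transfer G μ).1 hμ)⟩
    · exact (hasEigen_transfer G _).2 (M_hasEigenvalue G)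

lemma sqrt_maxDegree_le_M (hΔ : 1 ≤ G.maxDegree) :
    Real.sqrt (G.maxDegree : ℝ) ≤ Mval G := by
  obtain ⟨c, hc⟩ := G.exists_maximal_degree_vertex
  set Δ : ℝ := (G.maxDegree : ℝ) with hΔdef
  have hΔ0 : (0:ℝ) < Δ := by rw [hΔdef]; exact_mod_cast Nat.lt_of_lt_of_le zero_lt_one hΔ
  set x : EuclideanSpace ℝ V := (WithLp.equiv 2 (V → ℝ)).symm
    (fun v => if v = c then Real.sqrt Δ else if G.Adj c v then 1 else 0) with hxdef
  have hxv : ∀ v : V, x v = if v = c then Real.sqrt Δ else if G.Adj c v then 1 else 0 :=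
    fun v => rfl
  have hx0 : ∀ v, 0 ≤ x v := by
    intro v; rw [hxv]
    split_ifs <;> simp [Real.sqrt_nonneg]
  have hxc : x c = Real.sqrt Δ := by rw [hxv]; simp
  have hxne : x ≠ 0 := by
    intro h
    have : x c = 0 := by rw [h]; rfl
    rw [hxc] at this
    exact absurd this (ne_of_gt (Real.sqrt_pos.2 hΔ0))
  -- neighbor entries are 1
  have hxnb : ∀ u ∈ G.neighborFinset c, x u = 1 := by
    intro u hu
    rw [SimpleGraph.mem_neighborFinset] at hu
    rw [hxv]
    rw [if_neg (by rintro rfl; exact G.irrefl hu), if_pos hu]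
  -- norm squared
  have hnorm : ‖x‖ ^ 2 = 2 * Δ := by
    rw [← real_inner_self_eq_norm_sq, inner_euc]
    have hsub : insert c (G.neighborFinset c) ⊆ univ := subset_univ _
    rw [← Finset.sum_subset hsub (fun v _ hv => ?_)]
    · rw [Finset.sum_insert (by simp [SimpleGraph.mem_neighborFinset, G.irrefl])]
      rw [hxc, Real.mul_self_sqrt hΔ0.le]
      have : ∑ u ∈ G.neighborFinset c, x u * x u = ∑ u ∈ G.neighborFinset c, 1 := by
        exact Finset.sum_congr rfl fun u hu => by rw [hxnb u hu]; ring
      rw [this, Finset.sum_const, SimpleGraph.card_neighborFinset_eq_degree, ← hc]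
      rw [nsmul_eq_mul, mul_one, hΔdef]; ring
    · have : x v = 0 := by
        rw [hxv]
        rw [Finset.mem_insert, SimpleGraph.mem_neighborFinset] at hv
        push_neg at hv
        rw [if_neg hv.1, if_neg hv.2]
      rw [this]; ring
  -- inner product lower bound
  have hTx : ∀ v : V, Tclm G x v = ∑ u ∈ G.neighborFinset v, x u := by
    intro v
    rw [Tclm_apply]
    rw [SimpleGraph.neighborFinset_eq_filter, Finset.sum_filter]
    refine Finset.sum_congr rfl fun u _ => ?_
    rw [SimpleGraph.adjMatrix_apply]
    split_ifs <;> simp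
  have hinner : 2 * Δ * Real.sqrt Δ ≤ (⟪Tclm G x, x⟫ : ℝ) := by
    rw [inner_euc]
    have hterm : ∀ v : V, 0 ≤ Tclm G x v * x v := by
      intro v
      refine mul_nonneg ?_ (hx0 v)
      rw [hTx]
      exact Finset.sum_nonneg fun u _ => hx0 u
    have hsub : insert c (G.neighborFinset c) ⊆ univ := subset_univ _
    have h1 : ∑ v ∈ insert c (G.neighborFinset c), Tclm G x v * x v
        ≤ ∑ v : V, Tclm G x v * x v :=
      Finset.sum_le_sum_of_subset_of_nonneg hsub fun v _ _ => hterm v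
    refine le_trans ?_ h1
    rw [Finset.sum_insert (by simp [SimpleGraph.mem_neighborFinset, G.irrefl])]
    have hc1 : Tclm G x c * x c = Δ * Real.sqrt Δ := by
      rw [hTx, hxc]
      have : ∑ u ∈ G.neighborFinset c, x u = Δ := by
        rw [Finset.sum_congr rfl hxnb, Finset.sum_const,
          SimpleGraph.card_neighborFinset_eq_degree, ← hc, nsmul_eq_mul, mul_one, hΔdef]
      rw [this]
    have hc2 : Δ * Real.sqrt Δ ≤ ∑ v ∈ G.neighborFinset c, Tclm G x v * x v := by
      have hone : ∀ v ∈ G.neighborFinset c, Real.sqrt Δ ≤ Tclm G x v * x v := by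
        intro v hv
        rw [SimpleGraph.mem_neighborFinset] at hv
        have : Real.sqrt Δ ≤ Tclm G x v := by
          rw [hTx]
          have hcmem : c ∈ G.neighborFinset v := by
            rw [SimpleGraph.mem_neighborFinset]; exact hv.symm
          calc Real.sqrt Δ = x c := hxc.symm
            _ ≤ ∑ u ∈ G.neighborFinset v, x u :=
                Finset.single_le_sum (fun u _ => hx0 u) hcmem
        have hxv1 : x v = 1 := hxnb v (by rwa [SimpleGraph.mem_neighborFinset])
        rw [hxv1, mul_one]
        exact this
      calc Δ * Real.sqrt Δ = ∑ _v ∈ G.neighborFinset c, Real.sqrt Δ := by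
            rw [Finset.sum_const, SimpleGraph.card_neighborFinset_eq_degree, ← hc,
              nsmul_eq_mul, hΔdef]
        _ ≤ _ := Finset.sum_le_sum hone
    calc 2 * Δ * Real.sqrt Δ = Δ * Real.sqrt Δ + Δ * Real.sqrt Δ := by ring
      _ ≤ Tclm G x c * x c + ∑ v ∈ G.neighborFinset c, Tclm G x v * x v := by
          rw [hc1]; exact add_le_add le_rfl hc2
  have hray : Real.sqrt Δ ≤ (⟪Tclm G x, x⟫ : ℝ) / ‖x‖ ^ 2 := by
    rw [hnorm, le_div_iff₀ (by linarith)]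
    calc Real.sqrt Δ * (2 * Δ) = 2 * Δ * Real.sqrt Δ := by ring
      _ ≤ _ := hinner
  exact le_trans hray (rayleigh_le_M G x hxne)

lemma exists_nonneg_eigenvector :
    ∃ y : EuclideanSpace ℝ V, (∀ v, 0 ≤ y v) ∧ y ≠ 0 ∧ Tclm G y = Mval G • y := by
  obtain ⟨x, hx, hxne⟩ := (M_hasEigenvalue G).exists_hasEigenvector
  rw [Module.End.mem_eigenspace_iff, ContinuousLinearMap.coe_coe] at hx
  set y : EuclideanSpace ℝ V := (WithLp.equiv 2 (V → ℝ)).symm (fun v => |x v|) with hydef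
  have hyv : ∀ v : V, y v = |x v| := fun v => rfl
  have hy0 : ∀ v, 0 ≤ y v := fun v => by rw [hyv]; exact abs_nonneg _
  have hnorm : ‖y‖ = ‖x‖ := by
    rw [EuclideanSpace.norm_eq, EuclideanSpace.norm_eq]
    congr 1
    refine Finset.sum_congr rfl fun v _ => ?_
    rw [hyv]
    simp [sq_abs]
  have hyne : y ≠ 0 := by
    intro h
    apply hxne
    refine (WithLp.equiv 2 (V → ℝ)).injective ?_
    funext v
    have : y v = 0 := by rw [h]; rfl
    rw [hyv] at this
    simpa using abs_eq_zero.1 this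
  have hxpt : ∀ v : V, Tclm G x v = Mval G * x v := by
    intro v
    have := congrArg (fun z : EuclideanSpace ℝ V => z v) hx
    simpa using this
  -- Rayleigh quotient of y is at least M
  have hMxx : (⟪Tclm G x, x⟫ : ℝ) = Mval G * ‖x‖ ^ 2 := by
    rw [hx, real_inner_smul_left, real_inner_self_eq_norm_sq]
  have hiy : Mval G * ‖y‖ ^ 2 ≤ (⟪Tclm G y, y⟫ : ℝ) := by
    rw [inner_euc, hnorm]
    have hstep : ∀ v : V, Mval G * x v * x v ≤ Tclm G y v * y v := by
      intro v
      have h1 : |Mval G * x v| ≤ Tclm G y v := by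
        rw [← hxpt v, Tclm_apply, Tclm_apply]
        calc |∑ u : V, (G.adjMatrix ℝ) v u * x u|
            ≤ ∑ u : V, |(G.adjMatrix ℝ) v u * x u| := Finset.abs_sum_le_sum_abs _ _
          _ = ∑ u : V, (G.adjMatrix ℝ) v u * y u := by
              refine Finset.sum_congr rfl fun u _ => ?_
              rw [abs_mul, hyv]
              congr 1
              rw [SimpleGraph.adjMatrix_apply]
              split_ifs <;> simp
      calc Mval G * x v * x v ≤ |Mval G * x v * x v| := le_abs_self _
        _ = |Mval G * x v| * |x v| := by rw [abs_mul]
        _ ≤ Tclm G y v * y v := by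
            rw [hyv]
            exact mul_le_mul_of_nonneg_right h1 (abs_nonneg _)
    calc Mval G * ‖x‖ ^ 2 = (⟪Tclm G x, x⟫ : ℝ) := hMxx.symm
      _ = ∑ v : V, Mval G * x v * x v := by
          rw [inner_euc]
          exact Finset.sum_congr rfl fun v _ => by rw [hxpt v]
      _ ≤ ∑ v : V, Tclm G y v * y v := Finset.sum_le_sum fun v _ => hstep v
  -- y is a maximum of the Rayleigh quotient on its sphere
  have hynorm : (0:ℝ) < ‖y‖ := norm_pos_iff.mpr hyne
  have hmax : IsMaxOn (Tclm G).reApplyInnerSelf (Metric.sphere (0 : EuclideanSpace ℝ V) ‖y‖) y := by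
    intro z hz
    have hzn : ‖z‖ = ‖y‖ := by simpa using hz
    have hzne : z ≠ 0 := by
      intro h; rw [h] at hzn; simp at hzn; exact hynorm.ne' hzn.symm
    show (Tclm G).reApplyInnerSelf z ≤ (Tclm G).reApplyInnerSelf y
    have hray := rayleigh_le_M G z hzne
    have h2 : (⟪Tclm G z, z⟫ : ℝ) ≤ Mval G * ‖y‖ ^ 2 := by
      rw [← hzn]
      have hzpos : (0:ℝ) < ‖z‖ ^ 2 := by rw [hzn]; positivity
      calc (⟪Tclm G z, z⟫ : ℝ) = ((⟪Tclm G z, z⟫ : ℝ) / ‖z‖ ^ 2) * ‖z‖ ^ 2 := by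
            field_simp
        _ ≤ Mval G * ‖z‖ ^ 2 := mul_le_mul_of_nonneg_right hray hzpos.le
    exact le_trans h2 hiy
  have hvec := (TselfAdj G).hasEigenvector_of_isMaxOn hyne hmax
  have he : Tclm G y = Mval G • y := by
    have h1 := Module.End.mem_eigenspace_iff.1 hvec.1
    rw [ContinuousLinearMap.coe_coe] at h1
    exact h1
  exact ⟨y, hy0, hyne, he⟩

lemma eigenvector_pos (hT : G.IsTree) {y : EuclideanSpace ℝ V}
    (hy0 : ∀ v, 0 ≤ y v) (hyne : y ≠ 0) (heig : Tclm G y = Mval G • y) (v : V) : 0 < y v := by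
  have hpt : ∀ w : V, ∑ u ∈ G.neighborFinset w, y u = Mval G * y w := by
    intro w
    have := congrArg (fun z : EuclideanSpace ℝ V => z w) heig
    simp only at this
    rw [Tclm_apply, PiLp.smul_apply, smul_eq_mul] at this
    rw [← this]
    rw [SimpleGraph.neighborFinset_eq_filter, Finset.sum_filter]
    refine Finset.sum_congr rfl fun u _ => ?_
    rw [SimpleGraph.adjMatrix_apply]
    split_ifs <;> simp
  have prop : ∀ (a b : V) (p : G.Walk a b), y a = 0 → y b = 0 := by
    intro a b p
    induction p with
    | nil => exact id
    | @cons a' u b' h q ih =>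
      intro ha
      apply ih
      have h0 : ∑ u ∈ G.neighborFinset a', y u = 0 := by rw [hpt, ha, mul_zero]
      have := (Finset.sum_eq_zero_iff_of_nonneg (fun u _ => hy0 u)).1 h0
      exact this u (by rwa [SimpleGraph.mem_neighborFinset])
  have hex : ∃ w, y w ≠ 0 := by
    by_contra h
    push_neg at h
    apply hyne
    refine (WithLp.equiv 2 (V → ℝ)).injective ?_
    funext w
    simpa using h w
  obtain ⟨w, hw⟩ := hex
  rcases lt_or_eq_of_le (hy0 v) with h | h
  · exact h
  · exfalso
    obtain ⟨p⟩ := hT.isConnected.preconnected v w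
    exact hw (prop v w p h.symm)

set_option maxHeartbeats 2000000 in
theorem stmt_0 {V : Type} [Fintype V] [DecidableEq V] (G : SimpleGraph V)
    [DecidableRel G.Adj] (hT : G.IsTree) (h3 : 3 ≤ Fintype.card V) :
    (1 / 4) * (specRad G) ^ 2 + 1 < (G.maxDegree : ℝ) ∧
      (G.maxDegree : ℝ) ≤ (specRad G) ^ 2 := by
  classical
  haveI : Nonempty V := Fintype.card_pos_iff.1 (by omega)
  have hsum : ∑ v : V, G.degree v = 2 * (Fintype.card V - 1) := by
    have h := hT.card_edgeFinset
    rw [SimpleGraph.sum_degrees_eq_twice_card_edges]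
    omega
  -- max degree at least 2
  have hΔ2 : 2 ≤ G.maxDegree := by
    by_contra h
    push_neg at h
    have hle : ∀ v : V, G.degree v ≤ 1 := fun v => le_trans (G.degree_le_maxDegree v) (by omega)
    have : ∑ v : V, G.degree v ≤ ∑ _v : V, 1 := Finset.sum_le_sum fun v _ => hle v
    rw [Finset.sum_const, Finset.card_univ, smul_eq_mul, mul_one] at this
    omega
  obtain ⟨r, hr⟩ := G.exists_maximal_degree_vertex
  -- a leaf different from the root exists
  have hleaf : ∃ ℓ : V, ℓ ≠ r ∧ G.degree ℓ ≤ 1 := by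
    by_contra h
    push_neg at h
    have h2 : ∀ v ∈ univ.erase r, 2 ≤ G.degree v := fun v hv =>
      h v (Finset.mem_erase.1 hv).1
    have h3' : (univ.erase r).card • 2 ≤ ∑ v ∈ univ.erase r, G.degree v :=
      Finset.card_nsmul_le_sum _ _ _ h2
    rw [Finset.card_erase_of_mem (mem_univ r), Finset.card_univ] at h3'
    have h4 : ∑ v : V, G.degree v = G.degree r + ∑ v ∈ univ.erase r, G.degree v :=
      (Finset.add_sum_erase _ _ (mem_univ r)).symm
    have h5 : 2 ≤ G.degree r := hr ▸ hΔ2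
    have h6 : (Fintype.card V - 1) * 2 ≤ ∑ v ∈ univ.erase r, G.degree v := by
      simpa [smul_eq_mul] using h3'
    omega
  obtain ⟨ℓ, hℓr, hℓdeg⟩ := hleaf
  -- parent function
  have hPex : ∀ v : V, ∃ u : V, v ≠ r → (G.Adj v u ∧ G.dist u r + 1 = G.dist v r) := by
    intro v
    by_cases h : v = r
    · exact ⟨r, fun hc => absurd h hc⟩
    · obtain ⟨u, hu⟩ := tree_parent_exists hT r h
      exact ⟨u, fun _ => hu⟩
  choose P hP using hPex
  -- real quantities
  set Δ : ℝ := (G.maxDegree : ℝ) with hΔdef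
  have hΔ2R : (2:ℝ) ≤ Δ := by rw [hΔdef]; exact_mod_cast hΔ2
  set c : ℝ := Real.sqrt (Δ - 1) with hcdef
  have hc2 : c ^ 2 = Δ - 1 := Real.sq_sqrt (by linarith)
  have hc0 : 0 < c := Real.sqrt_pos.2 (by linarith)
  -- spectral radius equals M
  have hspec : specRad G = Mval G := specRad_eq_M G
  have hsqrtle : Real.sqrt Δ ≤ Mval G := sqrt_maxDegree_le_M G (by omega)
  have hM0 : 0 ≤ Mval G := le_trans (Real.sqrt_nonneg _) hsqrtle
  -- Part 2 : Δ ≤ M ^ 2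
  have part2 : Δ ≤ Mval G ^ 2 := by
    calc Δ = Real.sqrt Δ ^ 2 := (Real.sq_sqrt (by linarith)).symm
      _ ≤ Mval G ^ 2 := by
          apply pow_le_pow_left₀ (Real.sqrt_nonneg _) hsqrtle
  -- nonnegative positive eigenvector
  obtain ⟨y, hy0, hyne, heig⟩ := exists_nonneg_eigenvector G
  have ypos : ∀ v, 0 < y v := eigenvector_pos G hT hy0 hyne heig
  have hpt : ∀ w : V, ∑ u : V, (G.adjMatrix ℝ) w u * y u = Mval G * y w := by
    intro w
    have := congrArg (fun z : EuclideanSpace ℝ V => z w) heig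
    simp only at this
    rw [Tclm_apply, PiLp.smul_apply, smul_eq_mul] at this
    exact this
  set S : ℝ := ∑ v : V, y v ^ 2 with hSdef
  have hSpos : 0 < S := Finset.sum_pos (fun v _ => pow_pos (ypos v) 2) ⟨Classical.arbitrary V, mem_univ _⟩
  -- eigen identity summed
  have hterm : ∀ u : V, ∑ v : V, (G.adjMatrix ℝ) u v * (y v * y u) = Mval G * y u ^ 2 := by
    intro u
    have h1 : ∑ v : V, (G.adjMatrix ℝ) u v * (y v * y u)
        = (∑ v : V, (G.adjMatrix ℝ) u v * y v) * y u := by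
      rw [Finset.sum_mul]
      exact Finset.sum_congr rfl fun v _ => by ring
    rw [h1, hpt u]
    ring
  have hMS : Mval G * S = ∑ v ∈ univ.filter (· ≠ r), (y v * y (P v) + y (P v) * y v) := by
    calc Mval G * S = ∑ u : V, Mval G * y u ^ 2 := by rw [hSdef, Finset.mul_sum]
      _ = ∑ u : V, ∑ v : V, (G.adjMatrix ℝ) u v * (y v * y u) :=
          Finset.sum_congr rfl fun u _ => (hterm u).symm
      _ = _ := sum_adj_split hT r P hP (fun u v => y v * y u)
  -- AM-GM per edge
  have hedge : ∀ v ∈ univ.filter (· ≠ r),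
      y v * y (P v) + y (P v) * y v ≤ c⁻¹ * y (P v) ^ 2 + c * y v ^ 2 := by
    intro v _
    have hkey : c⁻¹ * (y (P v) - c * y v) ^ 2
        = c⁻¹ * y (P v) ^ 2 + c * y v ^ 2 - (y v * y (P v) + y (P v) * y v) := by
      field_simp
      ring
    nlinarith [mul_nonneg (inv_nonneg.2 hc0.le) (sq_nonneg (y (P v) - c * y v))]
  have h1 : Mval G * S ≤ ∑ v ∈ univ.filter (· ≠ r), (c⁻¹ * y (P v) ^ 2 + c * y v ^ 2) := by
    rw [hMS]
    exact Finset.sum_le_sum hedge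
  have hsplit2 : ∑ v ∈ univ.filter (· ≠ r), (c⁻¹ * y (P v) ^ 2 + c * y v ^ 2)
      = ∑ w : V, ((((univ.filter (· ≠ r)).filter (fun v => P v = w)).card : ℝ)
            * (c⁻¹ * y w ^ 2))
        + ∑ v ∈ univ.filter (· ≠ r), c * y v ^ 2 := by
    rw [Finset.sum_add_distrib, sum_parent_fiber r P (fun w => c⁻¹ * y w ^ 2)]
  have hsecond : ∑ v ∈ univ.filter (· ≠ r), c * y v ^ 2
      = ∑ w : V, (if w ≠ r then c else 0) * y w ^ 2 := by
    rw [Finset.sum_filter]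
    exact Finset.sum_congr rfl fun w _ => by split_ifs <;> ring
  have hcomb : Mval G * S ≤ ∑ w : V,
      ((((univ.filter (· ≠ r)).filter (fun v => P v = w)).card : ℝ) * c⁻¹
        + (if w ≠ r then c else 0)) * y w ^ 2 := by
    calc Mval G * S ≤ _ := h1
      _ = _ := by
        rw [hsplit2, hsecond, ← Finset.sum_add_distrib]
        exact Finset.sum_congr rfl fun w _ => by ring
  have hcard_le : ∀ w : V,
      ((((univ.filter (· ≠ r)).filter (fun v => P v = w)).card : ℝ)) ≤ Δ := by
    intro w
    have h := children_card_le r P hP w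
    have h2 := G.degree_le_maxDegree w
    rw [hΔdef]
    exact_mod_cast le_trans h h2
  have hcoeff : ∀ w : V,
      (((univ.filter (· ≠ r)).filter (fun v => P v = w)).card : ℝ) * c⁻¹
        + (if w ≠ r then c else 0) ≤ 2 * c := by
    intro w
    by_cases hw : w = r
    · have h0 : ¬ (w ≠ r) := by simp [hw]
      rw [if_neg h0, add_zero, ← div_eq_mul_inv, div_le_iff₀ hc0]
      nlinarith [hcard_le w]
    · have hcard1 : ((((univ.filter (· ≠ r)).filter (fun v => P v = w)).card : ℝ)) + 1 ≤ Δ := by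
        have h := children_card_add_one_le r P hP hw
        have h2 := G.degree_le_maxDegree w
        rw [hΔdef]
        exact_mod_cast le_trans h h2
      rw [if_pos hw, ← div_eq_mul_inv]
      have hh : ((((univ.filter (· ≠ r)).filter (fun v => P v = w)).card : ℝ)) / c ≤ c := by
        rw [div_le_iff₀ hc0]
        nlinarith [hc2]
      linarith
  have hleafcard : ((((univ.filter (· ≠ r)).filter (fun v => P v = ℓ)).card : ℝ)) = 0 := by
    have h := children_card_add_one_le r P hP hℓr
    have h2 : (((univ.filter (· ≠ r)).filter (fun v => P v = ℓ)).card) = 0 := by omega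
    exact_mod_cast h2
  have hstrict : ((((univ.filter (· ≠ r)).filter (fun v => P v = ℓ)).card : ℝ) * c⁻¹
        + (if ℓ ≠ r then c else 0)) * y ℓ ^ 2 < (2 * c) * y ℓ ^ 2 := by
    rw [hleafcard, zero_mul, zero_add, if_pos hℓr]
    exact mul_lt_mul_of_pos_right (by linarith) (pow_pos (ypos ℓ) 2)
  have hfinal : Mval G * S < 2 * c * S := by
    calc Mval G * S ≤ _ := hcomb
      _ < ∑ w : V, (2 * c) * y w ^ 2 :=
          Finset.sum_lt_sum
            (fun w _ => mul_le_mul_of_nonneg_right (hcoeff w) (sq_nonneg _))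
            ⟨ℓ, mem_univ _, hstrict⟩
      _ = 2 * c * S := by rw [hSdef, Finset.mul_sum]
  have hMlt : Mval G < 2 * c := lt_of_mul_lt_mul_right hfinal hSpos.le
  have hM2 : Mval G ^ 2 < 4 * (Δ - 1) := by nlinarith [hM0, hc2, hc0, hMlt]
  constructor
  · rw [hspec]
    linarith
  · rw [hspec]
    exact part2

end TreeSpectral
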